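/- Let k be a field of characteristic p > 0 and let L = θⁿ + Σ aᵢθⁱ be a differential operator with aᵢ ∈ k[[t]], acting on k[[t]] via θ = t·d/dt. Suppose F ∈ 1 + t·ℤ_p[[t]] satisfies 𝓛F = 0 for a lift 𝓛 of L over ℤ_p, and f = F/F^σ with F^σ(t) = F(t^p). If the reduction f̄ of f mod p lies in k[[t]], then L(f̄) ≡ 0 in k[[t]]; that is, the reduction of F/F^σ is a solution of L in characteristic p. -/

import Mathlib

open PowerSeries

/-- The logarithmic derivative `θ = t·d/dt` on formal power series. -/
noncomputable def theta {R : Type*} [CommRing R] (f : R⟦X⟧) : R⟦X⟧ :=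
  PowerSeries.X * PowerSeries.derivative R f

lemma coeff_theta {R : Type*} [CommRing R] (g : R⟦X⟧) (m : ℕ) :
    (coeff m) (theta g) = m * coeff m g := by
  cases m with
  | zero => simp [theta]
  | succ m =>
    rw [theta, PowerSeries.coeff_succ_X_mul, PowerSeries.coeff_derivative]
    push_cast; ring

lemma coeff_phi {R S : Type*} [CommRing R] [CommRing S] (p : ℕ)
    (φ : R⟦X⟧ →+* S⟦X⟧) (hX : φ X = X ^ p)
    (hC : ∀ c : R, ∃ d : S, φ (C c) = C d)
    (hp : 0 < p) (G : R⟦X⟧) (m : ℕ) (hm : ¬ p ∣ m) : coeff m (φ G) = 0 := by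
  have hpoly : ∀ P : Polynomial R, coeff m (φ (P : R⟦X⟧)) = 0 := by
    intro P
    induction P using Polynomial.induction_on' with
    | add f g hf hg => rw [Polynomial.coe_add, map_add, map_add, hf, hg, add_zero]
    | monomial i c =>
      rw [← Polynomial.C_mul_X_pow_eq_monomial, Polynomial.coe_mul, Polynomial.coe_C,
        Polynomial.coe_pow, Polynomial.coe_X, map_mul, map_pow, hX]
      obtain ⟨d, hd⟩ := hC c
      rw [hd, ← pow_mul, PowerSeries.coeff_C_mul, PowerSeries.coeff_X_pow]
      have : m ≠ p * i := fun h => hm (h ▸ Dvd.intro i rfl)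
      simp [this]
  -- split G
  have hdvd : (X : R⟦X⟧) ^ (m + 1) ∣ (G - (trunc (m+1) G : R⟦X⟧)) := by
    rw [PowerSeries.X_pow_dvd_iff]
    intro j hj
    rw [map_sub, Polynomial.coeff_coe, coeff_trunc, if_pos hj, sub_self]
  obtain ⟨u, hu⟩ := hdvd
  have hG : G = (trunc (m+1) G : R⟦X⟧) + X ^ (m+1) * u := by
    rw [← hu]; ring
  rw [hG, map_add, map_add, hpoly, zero_add, map_mul, map_pow, hX, ← pow_mul]
  have hdvd2 : (X : S⟦X⟧) ^ (p * (m+1)) ∣ X ^ (p * (m+1)) * φ u := Dvd.intro _ rfl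
  rw [PowerSeries.X_pow_dvd_iff] at hdvd2
  exact hdvd2 m (lt_of_lt_of_le (Nat.lt_succ_self m) (Nat.le_mul_of_pos_left _ hp))

lemma theta_phi {R : Type*} {k : Type*} [CommRing R] [Field k] (p : ℕ) [Fact p.Prime]
    [CharP k p] (φ : R⟦X⟧ →+* k⟦X⟧) (hX : φ X = X ^ p)
    (hC : ∀ c : R, ∃ d : k, φ (C c) = C d) (G : R⟦X⟧) :
    theta (φ G) = 0 := by
  ext m
  rw [coeff_theta, map_zero]
  by_cases h : p ∣ m
  · rw [(CharP.cast_eq_zero_iff k p m).mpr h, zero_mul]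
  · rw [coeff_phi p φ hX hC (Fact.out : p.Prime).pos G m h, mul_zero]

lemma theta_mul {R : Type*} [CommRing R] (a b : R⟦X⟧) :
    theta (a * b) = theta a * b + a * theta b := by
  simp only [theta, Derivation.leibniz, smul_eq_mul]
  ring

lemma theta_map {R S : Type*} [CommRing R] [CommRing S] (ρ : R →+* S) (g : R⟦X⟧) :
    theta (PowerSeries.map ρ g) = PowerSeries.map ρ (theta g) := by
  ext m
  rw [coeff_theta, PowerSeries.coeff_map, PowerSeries.coeff_map, coeff_theta]
  simp

lemma theta_iter_map {R S : Type*} [CommRing R] [CommRing S] (ρ : R →+* S) (g : R⟦X⟧)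
    (j : ℕ) : theta^[j] (PowerSeries.map ρ g) = PowerSeries.map ρ (theta^[j] g) := by
  induction j with
  | zero => rfl
  | succ j ih => rw [Function.iterate_succ_apply', Function.iterate_succ_apply', ih, theta_map]

/-- If `F ∈ 1 + tℤ_p[[t]]` solves a lift `𝓛` of `L`, then the reduction mod `p` of
`f = F/F^σ` (with `F^σ(t) = F(t^p)`) is a solution of `L` in characteristic `p`. -/
theorem unit_root_ratio_solves_mod_p (p : ℕ) [Fact p.Prime]
    {k : Type*} [Field k] [CharP k p] {n : ℕ} (hn : 1 ≤ n)
    (A : Fin n → PowerSeries ℤ_[p]) (a : Fin n → k⟦X⟧)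
    (ρ : ℤ_[p] →+* k)
    (hρ : ρ = (ZMod.castHom (dvd_refl p) k).comp PadicInt.toZMod)
    (ha : ∀ i, PowerSeries.map ρ (A i) = a i)
    (σ : PowerSeries ℤ_[p] →+* PowerSeries ℤ_[p])
    (hσX : σ PowerSeries.X = PowerSeries.X ^ p)
    (hσC : ∀ c : ℤ_[p], σ (C c) = C c)
    (F f : PowerSeries ℤ_[p]) (hF1 : constantCoeff F = 1)
    (hLF : theta^[n] F + ∑ i : Fin n, A i * theta^[(i : ℕ)] F = 0)
    (hf : f * σ F = F) :
    theta^[n] (PowerSeries.map ρ f)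
      + ∑ i : Fin n, a i * theta^[(i : ℕ)] (PowerSeries.map ρ f) = 0 := by
  set φ : PowerSeries ℤ_[p] →+* k⟦X⟧ := (PowerSeries.map ρ).comp σ with hφ
  have hφX : φ X = X ^ p := by
    simp [hφ, hσX]
  have hφC : ∀ c : ℤ_[p], ∃ d : k, φ (C c) = C d := fun c =>
    ⟨ρ c, by simp [hφ, hσC]⟩
  set Sb : k⟦X⟧ := PowerSeries.map ρ (σ F) with hSb
  set fb : k⟦X⟧ := PowerSeries.map ρ f with hfb
  set Fb : k⟦X⟧ := PowerSeries.map ρ F with hFb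
  have hθS : theta Sb = 0 := theta_phi p φ hφX hφC F
  have hprod : fb * Sb = Fb := by
    rw [hfb, hSb, hFb, ← map_mul, hf]
  have hiter : ∀ j, theta^[j] Fb = theta^[j] fb * Sb := by
    intro j
    induction j with
    | zero => exact hprod.symm
    | succ j ih =>
      rw [Function.iterate_succ_apply', Function.iterate_succ_apply', ih, theta_mul, hθS,
        mul_zero, add_zero]
  have hmain : (theta^[n] fb + ∑ i : Fin n, a i * theta^[(i : ℕ)] fb) * Sb = 0 := by
    have := congrArg (PowerSeries.map ρ) hLF
    rw [map_add, map_zero, map_sum] at this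
    simp only [map_mul, ha, ← hFb, ← theta_iter_map] at this
    rw [add_mul, Finset.sum_mul]
    rw [← hiter] at *
    calc theta^[n] Fb + ∑ i : Fin n, a i * theta^[(i:ℕ)] fb * Sb
        = theta^[n] Fb + ∑ i : Fin n, a i * theta^[(i:ℕ)] Fb := by
          congr 1
          exact Finset.sum_congr rfl fun i _ => by rw [hiter, mul_assoc]
      _ = 0 := this
  have hS0 : Sb ≠ 0 := by
    intro h
    have h1 : constantCoeff Fb = 1 := by
      have : constantCoeff Fb = ρ (constantCoeff F) := by
        rw [hFb, ← PowerSeries.coeff_zero_eq_constantCoeff_apply, PowerSeries.coeff_map]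
        simp
      rw [this, hF1, map_one]
    rw [← hprod, h, mul_zero, map_zero] at h1
    exact zero_ne_one h1
  rcases mul_eq_zero.mp hmain with h | h
  · exact h
  · exact absurd h hS0
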